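/- For a nonzero real number k and real numbers x, y with y > 0, the following are equivalent: (a) for every integer n, (nkx+1)² + (nky)² ≥ 1; (b) (x + 1/k)² + y² ≥ 1/k² and (x - 1/k)² + y² ≥ 1/k². -/

import Mathlib

theorem stmt_6 (k x y : ℝ) (hk : k ≠ 0) (hy : 0 < y) :
    (∀ n : ℤ, 1 ≤ (n * k * x + 1) ^ 2 + (n * k * y) ^ 2) ↔
      (1 / k ^ 2 ≤ (x + 1 / k) ^ 2 + y ^ 2 ∧ 1 / k ^ 2 ≤ (x - 1 / k) ^ 2 + y ^ 2) := by
  have hk2 : (0:ℝ) < k ^ 2 := by positivity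
  constructor
  · intro h
    have h1 := h 1
    have h2 := h (-1)
    push_cast at h1 h2
    constructor
    · rw [div_le_iff₀ hk2]
      have e : ((x + 1 / k) ^ 2 + y ^ 2) * k ^ 2 = (k * x + 1) ^ 2 + (k * y) ^ 2 := by
        field_simp
      rw [e]; nlinarith
    · rw [div_le_iff₀ hk2]
      have e : ((x - 1 / k) ^ 2 + y ^ 2) * k ^ 2 = (-(k * x) + 1) ^ 2 + (k * y) ^ 2 := by
        field_simp; ring
      rw [e]; nlinarith
  · rintro ⟨h1, h2⟩ n
    rw [div_le_iff₀ hk2] at h1 h2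
    -- h1 : 1 ≤ ((x+1/k)^2+y^2) * k^2, similar h2
    have hA : (0:ℝ) ≤ k ^ 2 * (x ^ 2 + y ^ 2) := by positivity
    have e1 : 0 ≤ k ^ 2 * (x ^ 2 + y ^ 2) + 2 * (k * x) := by
      have : (1/k) * k = 1 := by field_simp
      nlinarith [sq_nonneg (x + 1/k)]
    have e2 : 0 ≤ k ^ 2 * (x ^ 2 + y ^ 2) - 2 * (k * x) := by
      have : (1/k) * k = 1 := by field_simp
      nlinarith [sq_nonneg (x - 1/k)]
    rcases lt_trichotomy n 0 with hn | hn | hn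
    · have hn' : (n:ℝ) ≤ -1 := by exact_mod_cast Int.le_sub_one_of_lt hn
      nlinarith [mul_nonneg (mul_nonneg (neg_nonneg.2 (hn'.trans (by norm_num))) (neg_nonneg.2 (hn'.trans (by norm_num)))) hA,
        mul_nonneg (neg_nonneg.2 (hn'.trans (by norm_num : (-1:ℝ) ≤ 0))) e2]
    · subst hn; norm_num
    · have hn' : (1:ℝ) ≤ n := by exact_mod_cast hn
      nlinarith [mul_nonneg (mul_nonneg (le_trans zero_le_one hn') (le_trans zero_le_one hn')) hA,
        mul_nonneg (le_trans zero_le_one hn') e1]
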